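/- Let A be a random level algebra on n variables with socle degree D obtained by choosing each monomial of degree D independently with probability p as a socle generator, and set q = 1-p. Then the expected value of the Hilbert function of A in degree j, for 0 ≤ j < D, equals C(j+n-1, n-1)·(1 - q^{C(D-j+n-1, n-1)}). -/

import Mathlib

open MvPolynomial

/-- The finite set of exponent vectors of the monomials of degree exactly `D`
in `n` variables. -/
noncomputable def Mon (n D : ℕ) : Finset (Fin n →₀ ℕ) :=
  (Finset.Nat.antidiagonalTuple n D).map Finsupp.equivFunOnFinite.symm.toEmbedding

/-- The Macaulay annihilator of the monomial `x^b`: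
the ideal `⟨x_1^{b_1+1},…,x_n^{b_n+1}⟩`. -/
noncomputable def annMon (K : Type*) [Field K] {n : ℕ} (b : Fin n →₀ ℕ) :
    Ideal (MvPolynomial (Fin n) K) :=
  Ideal.span (Set.range fun i => (X i : MvPolynomial (Fin n) K) ^ (b i + 1))

/-- The Macaulay annihilator of a finite set of monomials, `Ann(B) = ⋂_{b ∈ B} Ann(x^b)`. -/
noncomputable def annSet (K : Type*) [Field K] {n : ℕ} (B : Finset (Fin n →₀ ℕ)) :
    Ideal (MvPolynomial (Fin n) K) :=
  B.inf (annMon K)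

/-- The Hilbert function of a graded quotient `S/I`. -/
noncomputable def hilb (K : Type*) [Field K] {n : ℕ} (I : Ideal (MvPolynomial (Fin n) K))
    (j : ℕ) : ℕ :=
  Module.finrank K
    (Submodule.map (Ideal.Quotient.mkₐ K I).toLinearMap
      (MvPolynomial.homogeneousSubmodule (Fin n) K j))

section Aux

lemma mem_Mon {n D : ℕ} {d : Fin n →₀ ℕ} : d ∈ Mon n D ↔ d.degree = D := by
  have hdeg : ∀ e : Fin n →₀ ℕ, e.degree = ∑ i, e i := by
    intro e
    exact Finset.sum_subset (Finset.subset_univ _)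
      (fun i _ h => Finsupp.notMem_support_iff.mp h)
  simp only [Mon, Finset.mem_map, Equiv.toEmbedding_apply, Finset.Nat.mem_antidiagonalTuple]
  constructor
  · rintro ⟨f, hf, rfl⟩
    rw [hdeg]
    simpa using hf
  · intro h
    exact ⟨Finsupp.equivFunOnFinite d, by rw [hdeg] at h; simpa using h, by simp⟩

lemma mem_annMon {K : Type*} [Field K] {n : ℕ} {b : Fin n →₀ ℕ} {f : MvPolynomial (Fin n) K} :
    f ∈ annMon K b ↔ ∀ d ∈ f.support, ¬ d ≤ b := by
  have hset : (Set.range fun i => (X i : MvPolynomial (Fin n) K) ^ (b i + 1))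
      = (fun s => monomial s (1 : K)) '' (Set.range fun i => Finsupp.single i (b i + 1)) := by
    rw [← Set.range_comp]
    refine congrArg _ (funext fun i => ?_)
    simp [Function.comp, X_pow_eq_monomial]
  rw [annMon, hset, mem_ideal_span_monomial_image]
  refine forall₂_congr fun d _ => ?_
  constructor
  · rintro ⟨s, ⟨i, rfl⟩, hs⟩ hle
    have := Finsupp.single_le_iff.mp hs
    exact absurd (Finsupp.le_def.mp hle i) (by omega)
  · intro h
    rcases not_forall.mp (fun hh => h (Finsupp.le_def.mpr hh)) with ⟨i, hi⟩
    exact ⟨Finsupp.single i (b i + 1), ⟨i, rfl⟩, Finsupp.single_le_iff.mpr (by omega)⟩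

lemma mem_annSet {K : Type*} [Field K] {n : ℕ} {B : Finset (Fin n →₀ ℕ)}
    {f : MvPolynomial (Fin n) K} :
    f ∈ annSet K B ↔ ∀ d ∈ f.support, ∀ b ∈ B, ¬ d ≤ b := by
  rw [annSet]
  constructor
  · intro h d hd b hb
    exact mem_annMon.mp (Submodule.mem_finsetInf.mp h b hb) d hd
  · intro h
    exact Submodule.mem_finsetInf.mpr fun b hb => mem_annMon.mpr fun d hd => h d hd b hb

end Aux

section Aux2
variable {K : Type*} [Field K] {n : ℕ}

lemma annSet_restrictScalars (B : Finset (Fin n →₀ ℕ)) :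
    Submodule.restrictScalars K (annSet K B) =
      AddMonoidAlgebra.supported K K {d : Fin n →₀ ℕ | ∀ b ∈ B, ¬ d ≤ b} := by
  ext f
  rw [Submodule.restrictScalars_mem, mem_annSet, AddMonoidAlgebra.mem_supported]
  constructor
  · intro h d hd
    exact h d hd
  · intro h d hd
    exact h hd

lemma finrank_supported {α : Type*} (s : Set α) [Fintype s] :
    Module.finrank K (AddMonoidAlgebra.supported K K s) = Fintype.card s := by
  rw [LinearEquiv.finrank_eq ((AddMonoidAlgebra.supportedEquivFinsupp s).trans
      (Finsupp.linearEquivFunOnFinite K K s))]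
  exact Module.finrank_fintype_fun_eq_card K

lemma finiteDimensional_supported {α : Type*} (s : Set α) [Fintype s] :
    FiniteDimensional K (AddMonoidAlgebra.supported K K s) :=
  LinearEquiv.finiteDimensional ((AddMonoidAlgebra.supportedEquivFinsupp s).trans
      (Finsupp.linearEquivFunOnFinite K K s)).symm

lemma hilb_annSet (B : Finset (Fin n →₀ ℕ)) (j : ℕ) :
    hilb K (annSet K B) j = ((Mon n j).filter (fun d => ∃ b ∈ B, d ≤ b)).card := by
  set I := annSet K B with hI
  set V := homogeneousSubmodule (Fin n) K j with hVdef
  set φ := (Ideal.Quotient.mkₐ K I).toLinearMap with hφ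
  have hMonSet : {d : Fin n →₀ ℕ | d.degree = j} = ↑(Mon n j) := by
    ext d; simp [mem_Mon]
  have hV : V = AddMonoidAlgebra.supported K K ↑(Mon n j) := by
    rw [hVdef, homogeneousSubmodule_eq_finsupp_supported, hMonSet]
  haveI : FiniteDimensional K V := by
    rw [hV]; exact finiteDimensional_supported _
  have rn := LinearMap.finrank_range_add_finrank_ker (φ.domRestrict V)
  rw [LinearMap.range_domRestrict, LinearMap.ker_domRestrict] at rn
  have hker : LinearMap.ker φ = Submodule.restrictScalars K I := by
    ext x
    rw [LinearMap.mem_ker, Submodule.restrictScalars_mem, hφ]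
    show Ideal.Quotient.mkₐ K I x = 0 ↔ x ∈ I
    rw [Ideal.Quotient.mkₐ_eq_mk]
    exact Ideal.Quotient.eq_zero_iff_mem
  have hcomap : Submodule.comap V.subtype (LinearMap.ker φ)
      = Submodule.comap V.subtype (V ⊓ Submodule.restrictScalars K I) := by
    rw [hker, Submodule.comap_inf, Submodule.comap_subtype_self, top_inf_eq]
  have hsets : ((↑(Mon n j) : Set (Fin n →₀ ℕ)) ∩ {d | ∀ b ∈ B, ¬ d ≤ b})
      = ↑((Mon n j).filter (fun d => ∀ b ∈ B, ¬ d ≤ b)) := by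
    ext d
    simp only [Set.mem_inter_iff, Finset.coe_filter, Set.mem_setOf_eq, Finset.mem_coe]
  have hinf : V ⊓ Submodule.restrictScalars K I
      = AddMonoidAlgebra.supported K K
          (↑((Mon n j).filter (fun d => ∀ b ∈ B, ¬ d ≤ b)) : Set (Fin n →₀ ℕ)) := by
    rw [hV, annSet_restrictScalars, ← hsets]
    ext f
    simp only [Submodule.mem_inf, AddMonoidAlgebra.mem_supported, Set.subset_inter_iff]
  have hfin2 : Module.finrank K (Submodule.comap V.subtype (LinearMap.ker φ))
      = ((Mon n j).filter (fun d => ∀ b ∈ B, ¬ d ≤ b)).card := by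
    rw [hcomap, LinearEquiv.finrank_eq (Submodule.comapSubtypeEquivOfLe inf_le_left), hinf]
    exact (finrank_supported _).trans (Fintype.card_coe _)
  have hfinV : Module.finrank K V = (Mon n j).card := by
    rw [hV]
    exact (finrank_supported _).trans (Fintype.card_coe _)
  have hfe : (Mon n j).filter (fun d => ∀ b ∈ B, ¬ d ≤ b)
      = (Mon n j).filter (fun d => ¬ ∃ b ∈ B, d ≤ b) := by
    ext d
    simp
  have hsplit : ((Mon n j).filter (fun d => ∃ b ∈ B, d ≤ b)).card
      + ((Mon n j).filter (fun d => ∀ b ∈ B, ¬ d ≤ b)).card = (Mon n j).card := by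
    rw [hfe]
    exact Finset.card_filter_add_card_filter_not (p := fun d => ∃ b ∈ B, d ≤ b)
  have hh : hilb K I j = Module.finrank K (Submodule.map φ V) := rfl
  omega
end Aux2

section Comb

lemma mem_Mon' {n m : ℕ} {d : Fin n →₀ ℕ} : d ∈ Mon n m ↔ ∑ i, d i = m := by
  rw [mem_Mon]
  unfold Finsupp.degree
  show ∑ i ∈ d.support, d i = m ↔ _
  rw [Finset.sum_subset (Finset.subset_univ _)
    (fun i _ h => Finsupp.notMem_support_iff.mp h)]

lemma card_Mon {n : ℕ} (hn : 1 ≤ n) (m : ℕ) :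
    (Mon n m).card = (m + n - 1).choose (n - 1) := by
  classical
  rw [← Fintype.card_coe]
  have e : ↥(Mon n m) ≃ Sym (Fin n) m := by
    refine (Equiv.subtypeEquivRight (fun d => ?_)).trans (Sym.equivNatSum (Fin n) m).symm
    rw [mem_Mon]
    rfl
  rw [Fintype.card_congr e, Sym.card_sym_eq_choose, Fintype.card_fin]
  obtain ⟨n', rfl⟩ := Nat.exists_eq_add_of_le hn
  simp only [Nat.add_sub_cancel_left, add_comm 1 n', Nat.add_sub_cancel]
  rw [show n' + 1 + m - 1 = n' + m by omega, show m + (n' + 1) - 1 = m + n' by omega,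
    Nat.add_comm n' m]
  exact Nat.choose_symm_add

lemma card_hitSet {n D j : ℕ} (hj : j ≤ D) {α : Fin n →₀ ℕ} (hα : α ∈ Mon n j) :
    ((Mon n D).filter (fun b => α ≤ b)).card = (Mon n (D - j)).card := by
  have hαs := mem_Mon'.mp hα
  refine Finset.card_bij' (fun b _ => b - α) (fun γ _ => α + γ) ?_ ?_ ?_ ?_
  · intro b hb
    rw [Finset.mem_filter] at hb
    obtain ⟨hbM, hba⟩ := hb
    have hbs := mem_Mon'.mp hbM
    rw [mem_Mon']
    have : ∀ i, (b - α) i = b i - α i := fun i => Finsupp.tsub_apply b α i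
    have hle : ∀ i, α i ≤ b i := Finsupp.le_def.mp hba
    have : ∑ i, (b - α) i = ∑ i, (b i - α i) :=
      Finset.sum_congr rfl fun i _ => Finsupp.tsub_apply b α i
    rw [this]
    have h2 : ∑ i, (b i - α i) + ∑ i, α i = ∑ i, b i := by
      rw [← Finset.sum_add_distrib]
      exact Finset.sum_congr rfl fun i _ => Nat.sub_add_cancel (hle i)
    omega
  · intro γ hγ
    have hγs := mem_Mon'.mp hγ
    rw [Finset.mem_filter, mem_Mon']
    constructor
    · rw [Finset.sum_congr rfl fun i (_ : i ∈ Finset.univ) => (Finsupp.add_apply α γ i),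
        Finset.sum_add_distrib, hαs, hγs]
      omega
    · exact Finsupp.le_def.mpr fun i => by simp
  · intro b hb
    rw [Finset.mem_filter] at hb
    ext i
    have hle := Finsupp.le_def.mp hb.2 i
    simp [Nat.add_sub_cancel' hle]
  · intro γ hγ
    ext i
    simp

end Comb

section Prob
variable {X : Type*} [DecidableEq X]

lemma sum_powerset_weight (M : Finset X) (p q : ℝ) (h : p + q = 1) :
    ∑ B ∈ M.powerset, p ^ B.card * q ^ (M.card - B.card) = 1 := by
  have hp := Finset.prod_add (fun _ : X => p) (fun _ : X => q) M
  simp only [Finset.prod_const, h, one_pow] at hp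
  rw [hp]
  refine Finset.sum_congr rfl fun B hB => ?_
  rw [Finset.card_sdiff_of_subset (Finset.mem_powerset.mp hB)]

lemma sum_powerset_hit (M S : Finset X) (hS : S ⊆ M) (p q : ℝ) (h : p + q = 1) :
    ∑ B ∈ M.powerset,
        p ^ B.card * q ^ (M.card - B.card) * (if (B ∩ S).Nonempty then (1:ℝ) else 0)
      = 1 - q ^ S.card := by
  have key : ∀ B ∈ M.powerset,
      p ^ B.card * q ^ (M.card - B.card) * (if (B ∩ S).Nonempty then (1:ℝ) else 0)
      = p ^ B.card * q ^ (M.card - B.card)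
        - (if B ∩ S = ∅ then p ^ B.card * q ^ (M.card - B.card) else 0) := by
    intro B _
    by_cases hBS : (B ∩ S).Nonempty
    · rw [if_pos hBS, if_neg (Finset.nonempty_iff_ne_empty.mp hBS)]; ring
    · rw [if_neg hBS, if_pos (Finset.not_nonempty_iff_eq_empty.mp hBS)]; ring
  rw [Finset.sum_congr rfl key, Finset.sum_sub_distrib, sum_powerset_weight M p q h,
    ← Finset.sum_filter]
  have hps : M.powerset.filter (fun B => B ∩ S = ∅) = (M \ S).powerset := by
    ext B
    simp only [Finset.mem_filter, Finset.mem_powerset, Finset.subset_sdiff,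
      ← Finset.disjoint_iff_inter_eq_empty]
  rw [hps]
  have hS' : S.card ≤ M.card := Finset.card_le_card hS
  have hc : (M \ S).card = M.card - S.card := Finset.card_sdiff_of_subset hS
  have hterm : ∀ B ∈ (M \ S).powerset,
      p ^ B.card * q ^ (M.card - B.card)
        = q ^ S.card * (p ^ B.card * q ^ ((M \ S).card - B.card)) := by
    intro B hB
    have hBc : B.card ≤ (M \ S).card := Finset.card_le_card (Finset.mem_powerset.mp hB)
    have : M.card - B.card = S.card + ((M \ S).card - B.card) := by omega
    rw [this, pow_add]
    ring
  rw [Finset.sum_congr rfl hterm, ← Finset.mul_sum, sum_powerset_weight _ p q h, mul_one]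

end Prob


/-- For the random level algebra `A = S/Ann(𝓑)` obtained by placing each monomial of degree
`D` in `n` variables into the socle set `𝓑` independently with probability `p` (and
`q = 1 - p`), the expected value of the Hilbert function of `A` in degree `j < D` is
`C(j+n-1, n-1) * (1 - q^{C(D-j+n-1, n-1)})`. -/
theorem stmt9 (K : Type*) [Field K] (n D : ℕ) (hn : 1 ≤ n) (hD : 1 ≤ D)
    (p q : ℝ) (hp0 : 0 ≤ p) (hp1 : p ≤ 1) (hq : q = 1 - p) (j : ℕ) (hj : j < D) :
    ∑ B ∈ (Mon n D).powerset,
        p ^ B.card * q ^ ((Mon n D).card - B.card) * (hilb K (annSet K B) j : ℝ)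
      = (Nat.choose (j + n - 1) (n - 1) : ℝ) *
        (1 - q ^ Nat.choose (D - j + n - 1) (n - 1)) := by
  have hq1 : p + q = 1 := by rw [hq]; ring
  have hjD : j ≤ D := hj.le
  have hstep : ∀ B ∈ (Mon n D).powerset, (hilb K (annSet K B) j : ℝ)
      = ∑ α ∈ Mon n j,
          (if (B ∩ ((Mon n D).filter (fun b => α ≤ b))).Nonempty then (1:ℝ) else 0) := by
    intro B hB
    have hBsub := Finset.mem_powerset.mp hB
    rw [hilb_annSet, Finset.card_filter]
    push_cast
    refine Finset.sum_congr rfl fun α hα => ?_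
    by_cases hex : ∃ b ∈ B, α ≤ b
    · rw [if_pos hex, if_pos]
      obtain ⟨b, hbB, hble⟩ := hex
      exact ⟨b, Finset.mem_inter.mpr ⟨hbB, Finset.mem_filter.mpr ⟨hBsub hbB, hble⟩⟩⟩
    · rw [if_neg hex, if_neg]
      rintro ⟨b, hb⟩
      rw [Finset.mem_inter, Finset.mem_filter] at hb
      exact hex ⟨b, hb.1, hb.2.2⟩
  calc ∑ B ∈ (Mon n D).powerset,
        p ^ B.card * q ^ ((Mon n D).card - B.card) * (hilb K (annSet K B) j : ℝ)
      = ∑ B ∈ (Mon n D).powerset, ∑ α ∈ Mon n j,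
          p ^ B.card * q ^ ((Mon n D).card - B.card) *
            (if (B ∩ ((Mon n D).filter (fun b => α ≤ b))).Nonempty then (1:ℝ) else 0) := by
        refine Finset.sum_congr rfl fun B hB => ?_
        rw [hstep B hB, Finset.mul_sum]
    _ = ∑ α ∈ Mon n j, ∑ B ∈ (Mon n D).powerset,
          p ^ B.card * q ^ ((Mon n D).card - B.card) *
            (if (B ∩ ((Mon n D).filter (fun b => α ≤ b))).Nonempty then (1:ℝ) else 0) :=
        Finset.sum_comm
    _ = ∑ α ∈ Mon n j, (1 - q ^ ((Mon n D).filter (fun b => α ≤ b)).card) := by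
        refine Finset.sum_congr rfl fun α hα => ?_
        exact sum_powerset_hit _ _ (Finset.filter_subset _ _) p q hq1
    _ = ∑ α ∈ Mon n j, (1 - q ^ Nat.choose (D - j + n - 1) (n - 1)) := by
        refine Finset.sum_congr rfl fun α hα => ?_
        rw [card_hitSet hjD hα, card_Mon hn]
    _ = (Nat.choose (j + n - 1) (n - 1) : ℝ) *
        (1 - q ^ Nat.choose (D - j + n - 1) (n - 1)) := by
        rw [Finset.sum_const, card_Mon hn, nsmul_eq_mul]
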